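/- In the full Cattown CP-net over {B, C, D, F, W} with no preference statements for B, the induced preorder has exactly two weakly connected components, distinguished by the value of B: two outcomes are connected (in the equivalence closure of the flip relation) if and only if they agree on B. -/

import Mathlib

inductive TownVar : Type
  | B | C | D | F | W
  deriving DecidableEq

instance : Fintype TownVar :=
  ⟨{TownVar.B, TownVar.C, TownVar.D, TownVar.F, TownVar.W}, fun x => by cases x <;> decide⟩

open TownVar

/-- Flip relation of the full Cattown CP-net over {B,C,D,F,W}: no preference
statement mentions B, so no flip changes B. -/
def townR (o u : TownVar → Bool) : Prop :=
  -- indifference on C (both directions)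
  (∀ x, x ≠ C → o x = u x) ∨
  -- no dog preferred to dog
  ((∀ x, x ≠ D → o x = u x) ∧ o D = true ∧ u D = false) ∨
  -- given ¬d: no fence preferred to fence
  ((∀ x, x ≠ F → o x = u x) ∧ o D = false ∧ o F = true ∧ u F = false) ∨
  -- given d: fence preferred to no fence
  ((∀ x, x ≠ F → o x = u x) ∧ o D = true ∧ o F = false ∧ u F = true) ∨
  -- given f: white preferred to non-white
  ((∀ x, x ≠ W → o x = u x) ∧ o F = true ∧ o W = false ∧ u W = true) ∨
  -- given ¬f: indifference on W (both directions)
  ((∀ x, x ≠ W → o x = u x) ∧ o F = false)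

/-- The induced preorder has exactly two weakly connected components,
distinguished by the value of B: two outcomes are connected in the
equivalence closure of the flip relation iff they agree on B. -/
theorem cattown_two_components (o u : TownVar → Bool) :
    Relation.EqvGen townR o u ↔ o B = u B := by
  constructor
  · intro h
    induction h with
    | rel x y hr =>
      rcases hr with h | ⟨h, _⟩ | ⟨h, _⟩ | ⟨h, _⟩ | ⟨h, _⟩ | ⟨h, _⟩ <;>
        exact h B (by decide)
    | refl => rfl
    | symm _ _ _ ih => exact ih.symm
    | trans _ _ _ _ _ ih1 ih2 => exact ih1.trans ih2
  · intro hB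
    have reach : ∀ v : TownVar → Bool,
        Relation.EqvGen townR v (fun x => if x = B then v B else false) := by
      intro v
      set v1 := Function.update v D false with hv1
      set v2 := Function.update v1 F false with hv2
      set v3 := Function.update v2 W false with hv3
      have h1 : Relation.EqvGen townR v v1 := by
        by_cases hd : v D = true
        · exact Relation.EqvGen.rel _ _ (Or.inr (Or.inl
            ⟨fun x hx => (Function.update_of_ne hx _ _).symm, hd,
              Function.update_self _ _ _⟩))
        · have : v1 = v := by
            funext x
            by_cases hx : x = D
            · subst hx
              simp [Bool.not_eq_true] at hd
              simp [hv1, hd]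
            · simp [hv1, Function.update_of_ne hx]
          rw [this]
          exact Relation.EqvGen.refl v
      have hv1D : v1 D = false := by simp [hv1]
      have h2 : Relation.EqvGen townR v1 v2 := by
        by_cases hf : v1 F = true
        · exact Relation.EqvGen.rel _ _ (Or.inr (Or.inr (Or.inl
            ⟨fun x hx => (Function.update_of_ne hx _ _).symm, hv1D, hf,
              Function.update_self _ _ _⟩)))
        · have : v2 = v1 := by
            funext x
            by_cases hx : x = F
            · subst hx
              simp [Bool.not_eq_true] at hf
              simp [hv2, hf]
            · simp [hv2, Function.update_of_ne hx]
          rw [this]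
          exact Relation.EqvGen.refl v1
      have hv2F : v2 F = false := by simp [hv2]
      have h3 : Relation.EqvGen townR v2 v3 :=
        Relation.EqvGen.rel _ _ (Or.inr (Or.inr (Or.inr (Or.inr (Or.inr
          ⟨fun x hx => (Function.update_of_ne hx _ _).symm, hv2F⟩)))))
      have h4 : Relation.EqvGen townR v3 (fun x => if x = B then v B else false) :=
        Relation.EqvGen.rel _ _ (Or.inl (by
          intro x hx
          cases x with
          | B => simp [hv3, hv2, hv1, Function.update_of_ne]
          | C => exact absurd rfl hx
          | D => simp [hv3, hv2, hv1]
          | F => simp [hv3, hv2]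
          | W => simp [hv3]))
      exact ((h1.trans _ _ _ h2).trans _ _ _ h3).trans _ _ _ h4
    have ho := reach o
    have hu := reach u
    have : (fun x => if x = B then o B else false) =
        (fun x => if x = B then u B else false) := by
      funext x; by_cases hx : x = B <;> simp [hx, hB]
    rw [this] at ho
    exact ho.trans _ _ _ ((Relation.EqvGen.symm _ _) hu)
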